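/- Let 𝔤_m ⊆ 𝔥_m be nilpotent Lie algebras acting compatibly on an algebra A with a character ε satisfying ε(δ_X(a)) = 0 for all X ∈ 𝔤_m and a ∈ A. Then the image of the orbit homomorphism A → A(H_m) associated to ε consists of functions invariant under right translation by the subgroup G_m = exp(𝔤_m), i.e. the orbit map factors through A(H_m/G_m). -/

import Mathlib

/-- let `𝔤_m ⊆ 𝔥_m` be nilpotent Lie algebras acting compatibly (by
derivations `δ`, exponentiating to an action `ρ` of the unipotent group `H_m` by
algebra automorphisms) on a commutative real algebra `A`, with a character `ε`
satisfying `ε(δ_X(a)) = 0` for all `X ∈ 𝔤_m` and `a ∈ A`.  Then the image of the orbit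
homomorphism `Θ : a ↦ [h ↦ ε(h⁻¹(a))]` associated to `ε` consists of functions on
`H_m` invariant under right translation by the subgroup `G_m = exp(𝔤_m)`:
`Θ(a)(hg) = Θ(a)(h)` for all `g ∈ G_m`.  Hence the orbit map factors through the
algebra of functions on the homogeneous space `H_m/G_m`. -/
theorem orbit_map_right_invariant
    {A : Type*} [CommRing A] [Algebra ℝ A]
    {𝔥 : Type*} [LieRing 𝔥] [LieAlgebra ℝ 𝔥] [FiniteDimensional ℝ 𝔥]
    [LieRing.IsNilpotent 𝔥]
    (𝔤 : LieSubalgebra ℝ 𝔥)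
    (δ : 𝔥 →ₗ[ℝ] Module.End ℝ A)
    (hder : ∀ (ξ : 𝔥) (a b : A), δ ξ (a * b) = δ ξ a * b + a * δ ξ b)
    (hlie : ∀ ξ η : 𝔥, δ ⁅ξ, η⁆ = δ ξ * δ η - δ η * δ ξ)
    {H : Type*} [Group H] (expmap : 𝔥 → H)
    (hgen : Subgroup.closure (Set.range expmap) = ⊤)
    (ρ : H →* (A ≃ₐ[ℝ] A))
    (hexp : ∀ (ξ : 𝔥) (a : A), ∃ N : ℕ, ((δ ξ) ^ N) a = 0 ∧
      ρ (expmap ξ) a = ∑ n ∈ Finset.range N, ((n.factorial : ℝ)⁻¹) • ((δ ξ) ^ n) a)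
    (ε : A →ₐ[ℝ] ℝ)
    (hann : ∀ ξ ∈ 𝔤, ∀ a : A, ε (δ ξ a) = 0) :
    ∀ a : A, ∀ h : H, ∀ g ∈ Subgroup.closure (expmap '' (𝔤 : Set 𝔥)),
      ε (ρ (h * g)⁻¹ a) = ε (ρ h⁻¹ a) := by
    -- Key claim: every element of the closure preserves ε under ρ.
  have key : ∀ g ∈ Subgroup.closure (expmap '' (𝔤 : Set 𝔥)), ∀ b : A, ε (ρ g b) = ε b := by
    intro g hg
    refine Subgroup.closure_induction ?_ ?_ ?_ ?_ hg
    · rintro x ⟨ξ, hξ, rfl⟩ b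
      obtain ⟨N, h0, hsum⟩ := hexp ξ b
      rw [hsum]
      cases N with
      | zero =>
        rw [show ((δ ξ)^0) b = b from rfl] at h0
        simp [h0]
      | succ M =>
        rw [map_sum, Finset.sum_range_succ']
        have : ∀ i ∈ Finset.range M, ε (((i+1).factorial : ℝ)⁻¹ • ((δ ξ) ^ (i+1)) b) = 0 := by
          intro i _
          have : ((δ ξ) ^ (i+1)) b = δ ξ (((δ ξ) ^ i) b) := by
            rw [pow_succ']; rfl
          rw [map_smul, this, hann ξ hξ, smul_zero]
        rw [Finset.sum_congr rfl this]
        simp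
    · intro b; simp
    · intro x y _ _ hx hy b
      rw [map_mul, AlgEquiv.mul_apply, hx, hy]
    · intro x _ hx b
      have := hx (ρ x⁻¹ b)
      rw [show ρ x (ρ x⁻¹ b) = b by rw [← AlgEquiv.mul_apply, ← map_mul, mul_inv_cancel, map_one]; rfl] at this
      exact this.symm
  intro a h g hg
  have hginv : g⁻¹ ∈ Subgroup.closure (expmap '' (𝔤 : Set 𝔥)) := inv_mem hg
  have : ρ (h * g)⁻¹ a = ρ g⁻¹ (ρ h⁻¹ a) := by
    rw [mul_inv_rev, map_mul]; rfl
  rw [this, key g⁻¹ hginv]
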